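/- With notation as in Lemma 3.2: if (x_V, 0, 0) ≈_W (y_V, 0, 0), i.e., (y_V − x_V, 0, 0) is an integer linear combination of characteristic vectors of white triangles of the trinity, then x_V and y_V are linearly equivalent chip configurations on the digraph D_V. -/

import Mathlib

open Finset

/-- A combinatorial trinity: a triangulation of the sphere `S²` whose `0`-simplices are
properly three-colored by `V` (violet), `E` (emerald) and `R` (red).  It is encoded by
its sets `Tw` of white and `Tb` of black triangles, the color of each corner of each
triangle, and the three edge-gluing bijections `σR`, `σE`, `σV` matching each white
triangle with the black triangle sharing its red (resp. emerald, violet) edge.  The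
link conditions state that the triangles around each vertex form a single cycle, and
connectivity of the surface is required; the sphere (Euler) condition
`|V| + |E| + |R| = |Tw| + 2` appears as a hypothesis of the theorems. -/
structure Trinity (V E R Tw Tb : Type) where
  vw : Tw → V
  ew : Tw → E
  rW : Tw → R
  vb : Tb → V
  eb : Tb → E
  rb : Tb → R
  σR : Tw ≃ Tb
  σE : Tw ≃ Tb
  σV : Tw ≃ Tb
  σR_v : ∀ t, vb (σR t) = vw t
  σR_e : ∀ t, eb (σR t) = ew t
  σE_v : ∀ t, vb (σE t) = vw t
  σE_r : ∀ t, rb (σE t) = rW t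
  σV_e : ∀ t, eb (σV t) = ew t
  σV_r : ∀ t, rb (σV t) = rW t
  vsurj : Function.Surjective vw
  esurj : Function.Surjective ew
  rsurj : Function.Surjective rW
  linkV : ∀ t t' : Tw, vw t = vw t' →
    Relation.ReflTransGen (fun a b => σR a = σE b) t t'
  linkE : ∀ t t' : Tw, ew t = ew t' →
    Relation.ReflTransGen (fun a b => σR a = σV b) t t'
  linkR : ∀ t t' : Tw, rW t = rW t' →
    Relation.ReflTransGen (fun a b => σE a = σV b) t t'
  conn : ∀ t t' : Tw, Relation.ReflTransGen (fun a b =>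
    σR a = σE b ∨ σR a = σV b ∨ σE a = σR b ∨ σE a = σV b ∨ σV a = σR b ∨ σV a = σE b) t t'

namespace Trinity

variable {V E R Tw Tb : Type}

/-- The characteristic vector (in `ℤ^{V∪E∪R}`) of a white triangle. -/
def chi [DecidableEq V] [DecidableEq E] [DecidableEq R]
    (S : Trinity V E R Tw Tb) (t : Tw) : (V → ℤ) × (E → ℤ) × (R → ℤ) :=
  (fun v => if S.vw t = v then 1 else 0,
   fun e => if S.ew t = e then 1 else 0,
   fun r => if S.rW t = r then 1 else 0)

/-- The Laplacian of the balanced plane digraph `D_V` applied to `z : V → ℤ`: for each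
white triangle `t`, the corresponding edge of `D_V` points from the violet vertex of
the black triangle `σV t` to the violet vertex of `t` (they share their violet edge),
and firing moves one chip along each such edge. -/
def lapV [Fintype Tw] [DecidableEq V] (S : Trinity V E R Tw Tb) (z : V → ℤ) : V → ℤ :=
  fun u => ∑ t : Tw, z (S.vb (S.σV t)) *
    ((if S.vw t = u then 1 else 0) - (if S.vb (S.σV t) = u then 1 else 0))

/-- Linear equivalence of chip configurations on `D_V`. -/
def linEqV [Fintype Tw] [DecidableEq V] (S : Trinity V E R Tw Tb) (x y : V → ℤ) : Prop :=
  ∃ z : V → ℤ, y = x + S.lapV z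

/-- The Laplacian of the balanced plane digraph `D_E` applied to `z : E → ℤ`. -/
def lapE [Fintype Tw] [DecidableEq E] (S : Trinity V E R Tw Tb) (z : E → ℤ) : E → ℤ :=
  fun u => ∑ t : Tw, z (S.eb (S.σE t)) *
    ((if S.ew t = u then 1 else 0) - (if S.eb (S.σE t) = u then 1 else 0))

/-- Linear equivalence of chip configurations on `D_E`. -/
def linEqE [Fintype Tw] [DecidableEq E] (S : Trinity V E R Tw Tb) (x y : E → ℤ) : Prop :=
  ∃ z : E → ℤ, y = x + S.lapE z

/-- The red graph `G_R`: the bipartite graph on `V ∪ E` formed by the red edges (the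
support simple graph; each red edge lies in a unique white triangle). -/
def SR (S : Trinity V E R Tw Tb) : SimpleGraph (V ⊕ E) where
  Adj a b := ∃ t : Tw, (a = Sum.inl (S.vw t) ∧ b = Sum.inr (S.ew t)) ∨
    (b = Sum.inl (S.vw t) ∧ a = Sum.inr (S.ew t))
  symm := by
    constructor
    rintro a b ⟨t, h | h⟩
    exacts [⟨t, Or.inr h⟩, ⟨t, Or.inl h⟩]
  loopless := by
    constructor
    rintro a ⟨t, ⟨h1, h2⟩ | ⟨h1, h2⟩⟩ <;> subst h1 <;> simp at h2

/-- The violet graph `G_V`: the bipartite graph on `R ∪ E` formed by the violet edges. -/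
def SV (S : Trinity V E R Tw Tb) : SimpleGraph (R ⊕ E) where
  Adj a b := ∃ t : Tw, (a = Sum.inl (S.rW t) ∧ b = Sum.inr (S.ew t)) ∨
    (b = Sum.inl (S.rW t) ∧ a = Sum.inr (S.ew t))
  symm := by
    constructor
    rintro a b ⟨t, h | h⟩
    exacts [⟨t, Or.inr h⟩, ⟨t, Or.inl h⟩]
  loopless := by
    constructor
    rintro a ⟨t, ⟨h1, h2⟩ | ⟨h1, h2⟩⟩ <;> subst h1 <;> simp at h2

/-- `f : E → ℤ` is a hypertree of the red graph `G_R` on `E`. -/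
def hypertreeRE (S : Trinity V E R Tw Tb) (f : E → ℤ) : Prop :=
  ∃ T : SimpleGraph (V ⊕ E), T ≤ S.SR ∧ T.IsTree ∧
    ∀ e : E, ((T.neighborSet (Sum.inr e)).ncard : ℤ) = f e + 1

/-- `f : E → ℤ` is a hypertree of the violet graph `G_V` on `E`. -/
def hypertreeVE (S : Trinity V E R Tw Tb) (f : E → ℤ) : Prop :=
  ∃ T : SimpleGraph (R ⊕ E), T ≤ S.SV ∧ T.IsTree ∧
    ∀ e : E, ((T.neighborSet (Sum.inr e)).ncard : ℤ) = f e + 1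

/-- `f : V → ℤ` is a hypertree of the red graph `G_R` on `V`. -/
def hypertreeRV (S : Trinity V E R Tw Tb) (f : V → ℤ) : Prop :=
  ∃ T : SimpleGraph (V ⊕ E), T ≤ S.SR ∧ T.IsTree ∧
    ∀ v : V, ((T.neighborSet (Sum.inl v)).ncard : ℤ) = f v + 1

/-- The common degree `d(e) = d_{G_R}(e) = d_{G_V}(e)` of an emerald vertex, i.e. the
number of white triangles at `e`. -/
noncomputable def dE (S : Trinity V E R Tw Tb) (e : E) : ℤ := (({t : Tw | S.ew t = e}).ncard : ℤ)

end Trinity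

set_option linter.unusedSectionVars false

section AuxWhite
open Relation Matrix

namespace Trinity

variable {V E R Tw Tb : Type}

def piW (S : Trinity V E R Tw Tb) : Tw ≃ Tw := S.σV.trans S.σR.symm
def rhoW (S : Trinity V E R Tw Tb) : Tw ≃ Tw := S.σV.trans S.σE.symm

lemma σR_piW (S : Trinity V E R Tw Tb) (t : Tw) : S.σR (S.piW t) = S.σV t := by
  simp [piW]

lemma σE_rhoW (S : Trinity V E R Tw Tb) (t : Tw) : S.σE (S.rhoW t) = S.σV t := by
  simp [rhoW]

lemma vb_σV (S : Trinity V E R Tw Tb) (t : Tw) : S.vb (S.σV t) = S.vw (S.piW t) := by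
  rw [← S.σR_piW t, S.σR_v]

lemma ew_piW (S : Trinity V E R Tw Tb) (t : Tw) : S.ew (S.piW t) = S.ew t := by
  rw [← S.σR_e (S.piW t), S.σR_piW, S.σV_e]

lemma rW_rhoW (S : Trinity V E R Tw Tb) (t : Tw) : S.rW (S.rhoW t) = S.rW t := by
  rw [← S.σE_r (S.rhoW t), S.σE_rhoW, S.σV_r]

lemma vw_rhoW (S : Trinity V E R Tw Tb) (t : Tw) : S.vw (S.rhoW t) = S.vw (S.piW t) := by
  rw [← S.σE_v (S.rhoW t), S.σE_rhoW, S.vb_σV]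

def adjV (S : Trinity V E R Tw Tb) (u v : V) : Prop :=
  ∃ t, (S.vw t = u ∧ S.vw (S.piW t) = v) ∨ (S.vw t = v ∧ S.vw (S.piW t) = u)

lemma step_adjV (S : Trinity V E R Tw Tb) {a b : Tw}
    (h : S.σR a = S.σE b ∨ S.σR a = S.σV b ∨ S.σE a = S.σR b ∨ S.σE a = S.σV b ∨
      S.σV a = S.σR b ∨ S.σV a = S.σE b) :
    ReflTransGen S.adjV (S.vw a) (S.vw b) := by
  rcases h with h | h | h | h | h | h
  · have : S.vw a = S.vw b := by rw [← S.σR_v a, ← S.σE_v b, h]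
    rw [this]
  · have ha : a = S.piW b := by
      have := congrArg S.σR.symm h
      simpa [piW] using this
    exact ReflTransGen.single ⟨b, Or.inr ⟨rfl, by rw [← ha]⟩⟩
  · have : S.vw a = S.vw b := by rw [← S.σE_v a, ← S.σR_v b, h]
    rw [this]
  · have ha : a = S.rhoW b := by
      have := congrArg S.σE.symm h
      simpa [rhoW] using this
    exact ReflTransGen.single ⟨b, Or.inr ⟨rfl, by rw [← S.vw_rhoW, ← ha]⟩⟩
  · have hb : b = S.piW a := by
      have := congrArg S.σR.symm h.symm
      simpa [piW] using this
    exact ReflTransGen.single ⟨a, Or.inl ⟨rfl, by rw [← hb]⟩⟩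
  · have hb : b = S.rhoW a := by
      have := congrArg S.σE.symm h.symm
      simpa [rhoW] using this
    exact ReflTransGen.single ⟨a, Or.inl ⟨rfl, by rw [← S.vw_rhoW, ← hb]⟩⟩

lemma connV (S : Trinity V E R Tw Tb) (u v : V) : ReflTransGen S.adjV u v := by
  obtain ⟨a, rfl⟩ := S.vsurj u
  obtain ⟨b, rfl⟩ := S.vsurj v
  have h := S.conn a b
  induction h with
  | refl => exact ReflTransGen.refl
  | tail h1 h2 ih => exact ih.trans (S.step_adjV h2)

section LinAlg

variable [Fintype V] [Fintype E] [Fintype R] [Fintype Tw]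
  [DecidableEq V] [DecidableEq E] [DecidableEq R]

lemma twNonempty (S : Trinity V E R Tw Tb)
    (heuler : Fintype.card V + Fintype.card E + Fintype.card R = Fintype.card Tw + 2) :
    Nonempty Tw := by
  by_contra h
  rw [not_nonempty_iff] at h
  have hV : IsEmpty V := ⟨fun v => h.false (S.vsurj v).choose⟩
  have hE : IsEmpty E := ⟨fun e => h.false (S.esurj e).choose⟩
  have hR : IsEmpty R := ⟨fun r => h.false (S.rsurj r).choose⟩
  rw [Fintype.card_eq_zero, Fintype.card_eq_zero, Fintype.card_eq_zero,
    Fintype.card_eq_zero] at heuler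
  omega

noncomputable def Lmap (S : Trinity V E R Tw Tb) : (V → ℚ) →ₗ[ℚ] (Tw → ℚ) where
  toFun z := fun t => z (S.vw (S.piW t)) - z (S.vw t)
  map_add' a b := by funext t; simp [Pi.add_apply]; ring
  map_smul' m a := by funext t; simp [Pi.smul_apply, smul_eq_mul]; ring

def Bmat (S : Trinity V E R Tw Tb) : Matrix (E ⊕ R) Tw ℚ :=
  fun i t => Sum.elim (fun e => if S.ew t = e then 1 else 0)
    (fun r => if S.rW t = r then 1 else 0) i

lemma Bmat_mulVec_inl (S : Trinity V E R Tw Tb) (w : Tw → ℚ) (e : E) :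
    S.Bmat.mulVecLin w (Sum.inl e) = ∑ t, if S.ew t = e then w t else 0 := by
  simp [Bmat, Matrix.mulVecLin_apply, Matrix.mulVec, dotProduct, ite_mul]

lemma Bmat_mulVec_inr (S : Trinity V E R Tw Tb) (w : Tw → ℚ) (r : R) :
    S.Bmat.mulVecLin w (Sum.inr r) = ∑ t, if S.rW t = r then w t else 0 := by
  simp [Bmat, Matrix.mulVecLin_apply, Matrix.mulVec, dotProduct, ite_mul]

lemma BmatT_mulVec (S : Trinity V E R Tw Tb) (f : E ⊕ R → ℚ) (t : Tw) :
    S.Bmatᵀ.mulVecLin f t = f (Sum.inl (S.ew t)) + f (Sum.inr (S.rW t)) := by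
  simp [Bmat, Matrix.mulVecLin_apply, Matrix.vecMul, dotProduct,
    Fintype.sum_sum_type, mul_ite, mul_one, mul_zero, Finset.sum_ite_eq]

lemma ker_Lmap (S : Trinity V E R Tw Tb) (hne : Nonempty Tw) :
    LinearMap.ker S.Lmap = Submodule.span ℚ {(fun _ => 1 : V → ℚ)} := by
  apply le_antisymm
  · intro z hz
    have hz' : ∀ t, z (S.vw (S.piW t)) = z (S.vw t) := by
      intro t
      have := congrFun (LinearMap.mem_ker.mp hz) t
      simpa [Lmap, sub_eq_zero] using this
    have key : ∀ u v : V, S.adjV u v → z v = z u := by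
      rintro u v ⟨t, ⟨h1, h2⟩ | ⟨h1, h2⟩⟩
      · rw [← h1, ← h2, hz']
      · rw [← h1, ← h2, hz']
    obtain ⟨t0⟩ := hne
    have hconst : ∀ v, z v = z (S.vw t0) := by
      intro v
      have h := S.connV (S.vw t0) v
      induction h with
      | refl => rfl
      | tail h1 h2 ih => rw [key _ _ h2, ih]
    refine Submodule.mem_span_singleton.mpr ⟨z (S.vw t0), ?_⟩
    funext v
    simp [hconst v, smul_eq_mul]
  · rw [Submodule.span_le, Set.singleton_subset_iff]
    refine LinearMap.mem_ker.mpr ?_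
    funext t
    simp [Lmap]

lemma finrank_range_Lmap (S : Trinity V E R Tw Tb) (hne : Nonempty Tw) :
    Module.finrank ℚ (LinearMap.range S.Lmap) + 1 = Fintype.card V := by
  have h := S.Lmap.finrank_range_add_finrank_ker
  rw [S.ker_Lmap hne] at h
  have hVne : Nonempty V := ⟨S.vw hne.some⟩
  have h1 : Module.finrank ℚ (Submodule.span ℚ {(fun _ => 1 : V → ℚ)}) = 1 := by
    apply finrank_span_singleton
    intro h0
    have := congrFun h0 hVne.some
    norm_num at this
  rw [h1, Module.finrank_fintype_fun_eq_card] at h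
  exact h

/-- the all-one on E, minus-one on R vector -/
def uvec : E ⊕ R → ℚ := Sum.elim (fun _ => 1) (fun _ => -1)

lemma stepE (S : Trinity V E R Tw Tb) {f : E ⊕ R → ℚ}
    (hf : ∀ t, f (Sum.inl (S.ew t)) + f (Sum.inr (S.rW t)) = 0) {a b : Tw}
    (h : S.σR a = S.σE b ∨ S.σR a = S.σV b ∨ S.σE a = S.σR b ∨ S.σE a = S.σV b ∨
      S.σV a = S.σR b ∨ S.σV a = S.σE b) :
    f (Sum.inl (S.ew a)) = f (Sum.inl (S.ew b)) := by
  rcases h with h | h | h | h | h | h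
  · set t0 := S.σV.symm (S.σR a) with ht0
    have he : S.ew t0 = S.ew a := by
      rw [← S.σV_e t0, ht0, Equiv.apply_symm_apply, S.σR_e]
    have hr : S.rW t0 = S.rW b := by
      rw [← S.σV_r t0, ht0, Equiv.apply_symm_apply, h, S.σE_r]
    have h1 := hf t0
    have h2 := hf b
    rw [he, hr] at h1
    linarith
  · have he : S.ew a = S.ew b := by rw [← S.σR_e a, h, S.σV_e]
    rw [he]
  · set t0 := S.σV.symm (S.σR b) with ht0
    have he : S.ew t0 = S.ew b := by
      rw [← S.σV_e t0, ht0, Equiv.apply_symm_apply, S.σR_e]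
    have hr : S.rW t0 = S.rW a := by
      rw [← S.σV_r t0, ht0, Equiv.apply_symm_apply, ← h, S.σE_r]
    have h1 := hf t0
    have h2 := hf a
    rw [he, hr] at h1
    linarith
  · have hr : S.rW a = S.rW b := by rw [← S.σE_r a, h, S.σV_r]
    have h1 := hf a
    have h2 := hf b
    rw [hr] at h1
    linarith
  · have he : S.ew a = S.ew b := by rw [← S.σV_e a, h, S.σR_e]
    rw [he]
  · have hr : S.rW a = S.rW b := by rw [← S.σV_r a, h, S.σE_r]
    have h1 := hf a
    have h2 := hf b
    rw [hr] at h1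
    linarith

lemma ker_BmatT (S : Trinity V E R Tw Tb) (hne : Nonempty Tw) :
    LinearMap.ker S.Bmatᵀ.mulVecLin
      = Submodule.span ℚ {(uvec : E ⊕ R → ℚ)} := by
  obtain ⟨t0⟩ := hne
  apply le_antisymm
  · intro f hfker
    have hf : ∀ t, f (Sum.inl (S.ew t)) + f (Sum.inr (S.rW t)) = 0 := by
      intro t
      have := congrFun (LinearMap.mem_ker.mp hfker) t
      rwa [S.BmatT_mulVec] at this
    have hE : ∀ a b : Tw, f (Sum.inl (S.ew a)) = f (Sum.inl (S.ew b)) := by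
      intro a b
      have h := S.conn a b
      induction h with
      | refl => rfl
      | tail h1 h2 ih => rw [ih, S.stepE hf h2]
    refine Submodule.mem_span_singleton.mpr ⟨f (Sum.inl (S.ew t0)), ?_⟩
    funext i
    cases i with
    | inl e =>
      obtain ⟨t, rfl⟩ := S.esurj e
      simp [uvec, smul_eq_mul, hE t0 t]
    | inr r =>
      obtain ⟨t, rfl⟩ := S.rsurj r
      have := hf t
      have h2 := hE t0 t
      simp only [uvec, Pi.smul_apply, Sum.elim_inr, smul_eq_mul]
      linarith
  · rw [Submodule.span_le, Set.singleton_subset_iff]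
    refine LinearMap.mem_ker.mpr ?_
    funext t
    rw [S.BmatT_mulVec]
    simp [uvec]

lemma finrank_ker_Bmat (S : Trinity V E R Tw Tb) (hne : Nonempty Tw) :
    Module.finrank ℚ (LinearMap.ker S.Bmat.mulVecLin) + Fintype.card E + Fintype.card R
      = Fintype.card Tw + 1 := by
  have hEne : Nonempty E := ⟨S.ew hne.some⟩
  have hu : (uvec : E ⊕ R → ℚ) ≠ 0 := by
    intro h0
    have := congrFun h0 (Sum.inl hEne.some)
    norm_num [uvec] at this
  have hT := (S.Bmatᵀ.mulVecLin).finrank_range_add_finrank_ker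
  rw [S.ker_BmatT hne, finrank_span_singleton hu, Module.finrank_fintype_fun_eq_card,
    Fintype.card_sum] at hT
  have hrank : S.Bmatᵀ.rank = S.Bmat.rank := Matrix.rank_transpose S.Bmat
  have hB := (S.Bmat.mulVecLin).finrank_range_add_finrank_ker
  rw [Module.finrank_fintype_fun_eq_card] at hB
  have e1 : S.Bmatᵀ.rank = Module.finrank ℚ (LinearMap.range S.Bmatᵀ.mulVecLin) := rfl
  have e2 : S.Bmat.rank = Module.finrank ℚ (LinearMap.range S.Bmat.mulVecLin) := rfl
  omega

lemma range_le_ker (S : Trinity V E R Tw Tb) :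
    LinearMap.range S.Lmap ≤ LinearMap.ker S.Bmat.mulVecLin := by
  rintro _ ⟨z, rfl⟩
  refine LinearMap.mem_ker.mpr ?_
  funext i
  cases i with
  | inl e =>
    rw [S.Bmat_mulVec_inl]
    have : ∀ t : Tw, (if S.ew t = e then S.Lmap z t else 0)
        = (if S.ew t = e then z (S.vw (S.piW t)) else 0)
          - (if S.ew t = e then z (S.vw t) else 0) := by
      intro t; by_cases h : S.ew t = e <;> simp [h, Lmap]
    rw [Finset.sum_congr rfl fun t _ => this t, Finset.sum_sub_distrib]
    have hre : ∑ t : Tw, (if S.ew t = e then z (S.vw (S.piW t)) else 0)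
        = ∑ t : Tw, (if S.ew t = e then z (S.vw t) else 0) := by
      refine Fintype.sum_equiv S.piW _ _ fun t => ?_
      rw [S.ew_piW]
    rw [hre]
    simp
  | inr r =>
    rw [S.Bmat_mulVec_inr]
    have : ∀ t : Tw, (if S.rW t = r then S.Lmap z t else 0)
        = (if S.rW t = r then z (S.vw (S.rhoW t)) else 0)
          - (if S.rW t = r then z (S.vw t) else 0) := by
      intro t; by_cases h : S.rW t = r <;> simp [h, Lmap, S.vw_rhoW]
    rw [Finset.sum_congr rfl fun t _ => this t, Finset.sum_sub_distrib]
    have hre : ∑ t : Tw, (if S.rW t = r then z (S.vw (S.rhoW t)) else 0)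
        = ∑ t : Tw, (if S.rW t = r then z (S.vw t) else 0) := by
      refine Fintype.sum_equiv S.rhoW _ _ fun t => ?_
      rw [S.rW_rhoW]
    rw [hre]
    simp

lemma ker_eq_range (S : Trinity V E R Tw Tb)
    (heuler : Fintype.card V + Fintype.card E + Fintype.card R = Fintype.card Tw + 2) :
    LinearMap.ker S.Bmat.mulVecLin = LinearMap.range S.Lmap := by
  have hne := S.twNonempty heuler
  have h1 := S.finrank_range_Lmap hne
  have h2 := S.finrank_ker_Bmat hne
  exact (Submodule.eq_of_le_of_finrank_le (S.range_le_ker) (by omega)).symm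

end LinAlg

end Trinity

end AuxWhite

set_option maxHeartbeats 1000000

/-- Lemma 3.3: if `(y − x, 0, 0)` is an integer linear combination of
characteristic vectors of white triangles of the trinity, then the chip
configurations `x` and `y` are linearly equivalent on the digraph `D_V`. -/
theorem white_triangle_equiv_implies_lin_equiv
    {V E R Tw Tb : Type} [Fintype V] [Fintype E] [Fintype R] [Fintype Tw]
    [DecidableEq V] [DecidableEq E] [DecidableEq R]
    (S : Trinity V E R Tw Tb)
    (heuler : Fintype.card V + Fintype.card E + Fintype.card R = Fintype.card Tw + 2)
    (x y : V → ℤ)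
    (hW : ∃ c : Tw → ℤ,
      ((y - x, 0, 0) : (V → ℤ) × (E → ℤ) × (R → ℤ)) = ∑ t : Tw, c t • S.chi t) :
    S.linEqV x y := by
  classical
  obtain ⟨c, hc⟩ := hW
  have hne : Nonempty Tw := S.twNonempty heuler
  -- component equations
  have h1 : ∀ v, y v - x v = ∑ t, c t * (if S.vw t = v then 1 else 0) := by
    intro v
    have h := congrFun (congrArg Prod.fst hc) v
    simpa [Prod.fst_sum, Finset.sum_apply, Trinity.chi, smul_eq_mul] using h
  have h2 : ∀ e, (0 : ℤ) = ∑ t, c t * (if S.ew t = e then 1 else 0) := by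
    intro e
    have h := congrFun (congrArg (fun p => p.2.1) hc) e
    simpa [Prod.fst_sum, Prod.snd_sum, Finset.sum_apply, Trinity.chi, smul_eq_mul] using h
  have h3 : ∀ r, (0 : ℤ) = ∑ t, c t * (if S.rW t = r then 1 else 0) := by
    intro r
    have h := congrFun (congrArg (fun p => p.2.2) hc) r
    simpa [Prod.fst_sum, Prod.snd_sum, Finset.sum_apply, Trinity.chi, smul_eq_mul] using h
  -- the rational vector c is in the kernel of Bmat
  have hcker : (fun t => (c t : ℚ)) ∈ LinearMap.ker S.Bmat.mulVecLin := by
    refine LinearMap.mem_ker.mpr ?_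
    funext i
    cases i with
    | inl e =>
      rw [S.Bmat_mulVec_inl]
      have := h2 e
      have hcast : ((∑ t, c t * (if S.ew t = e then 1 else 0) : ℤ) : ℚ)
          = ∑ t, (if S.ew t = e then (c t : ℚ) else 0) := by
        push_cast
        refine Finset.sum_congr rfl fun t _ => ?_
        by_cases h : S.ew t = e <;> simp [h]
      rw [Pi.zero_apply, ← hcast, ← this]
      norm_num
    | inr r =>
      rw [S.Bmat_mulVec_inr]
      have := h3 r
      have hcast : ((∑ t, c t * (if S.rW t = r then 1 else 0) : ℤ) : ℚ)
          = ∑ t, (if S.rW t = r then (c t : ℚ) else 0) := by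
        push_cast
        refine Finset.sum_congr rfl fun t _ => ?_
        by_cases h : S.rW t = r <;> simp [h]
      rw [Pi.zero_apply, ← hcast, ← this]
      norm_num
  -- hence c is a rational gradient
  rw [S.ker_eq_range heuler] at hcker
  obtain ⟨z, hz⟩ := hcker
  have hzt : ∀ t, z (S.vw (S.piW t)) - z (S.vw t) = (c t : ℚ) := by
    intro t
    exact congrFun hz t
  -- integrality of the potential
  obtain ⟨t0⟩ := hne
  have key : ∀ v, ∃ k : ℤ, z v - z (S.vw t0) = k := by
    intro v
    have h := S.connV (S.vw t0) v
    induction h with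
    | refl => exact ⟨0, by simp⟩
    | tail h1 h2 ih =>
      obtain ⟨k, hk⟩ := ih
      rcases h2 with ⟨t, ⟨ha, hb⟩ | ⟨ha, hb⟩⟩
      · refine ⟨k + c t, ?_⟩
        have := hzt t
        rw [ha, hb] at this
        push_cast
        linarith
      · refine ⟨k - c t, ?_⟩
        have := hzt t
        rw [ha, hb] at this
        push_cast
        linarith
  set zi : V → ℤ := fun v => (key v).choose with hzidef
  have hzi : ∀ v, z v - z (S.vw t0) = (zi v : ℚ) := fun v => (key v).choose_spec
  have hzdiff : ∀ t, zi (S.vw (S.piW t)) - zi (S.vw t) = c t := by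
    intro t
    have : ((zi (S.vw (S.piW t)) - zi (S.vw t) : ℤ) : ℚ) = ((c t : ℤ) : ℚ) := by
      push_cast
      have e1 := hzi (S.vw (S.piW t))
      have e2 := hzi (S.vw t)
      have e3 := hzt t
      linarith
    exact_mod_cast this
  -- conclude
  refine ⟨zi, ?_⟩
  funext u
  show y u = x u + S.lapV zi u
  have hlap : S.lapV zi u
      = ∑ t, zi (S.vw (S.piW t)) * ((if S.vw t = u then 1 else 0)
        - (if S.vw (S.piW t) = u then 1 else 0)) := by
    unfold Trinity.lapV
    refine Finset.sum_congr rfl fun t _ => ?_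
    rw [S.vb_σV]
  have hsplit : ∀ t : Tw, zi (S.vw (S.piW t)) * ((if S.vw t = u then 1 else 0)
        - (if S.vw (S.piW t) = u then 1 else 0))
      = (if S.vw t = u then zi (S.vw (S.piW t)) else 0)
        - (if S.vw (S.piW t) = u then zi (S.vw (S.piW t)) else 0) := by
    intro t
    by_cases hA : S.vw t = u <;> by_cases hB : S.vw (S.piW t) = u <;> simp [hA, hB]
  have hre : ∑ t : Tw, (if S.vw (S.piW t) = u then zi (S.vw (S.piW t)) else 0)
      = ∑ t : Tw, (if S.vw t = u then zi (S.vw t) else 0) := by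
    exact Fintype.sum_equiv S.piW
      (fun t => if S.vw (S.piW t) = u then zi (S.vw (S.piW t)) else 0)
      (fun s => if S.vw s = u then zi (S.vw s) else 0) (fun t => rfl)
  have hfin : S.lapV zi u = ∑ t, (c t) * (if S.vw t = u then 1 else 0) := by
    rw [hlap, Finset.sum_congr rfl fun t _ => hsplit t, Finset.sum_sub_distrib, hre,
      ← Finset.sum_sub_distrib]
    refine Finset.sum_congr rfl fun t _ => ?_
    rw [← hzdiff t]
    by_cases hA : S.vw t = u <;> simp [hA]
  rw [hfin, ← h1 u]
  ring
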